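/- Let G be a group, V a rational vector space, and κ : G → V a map satisfying κ(1) = 0, κ(g x g⁻¹) = κ(x), and κ(xy) + κ(x y⁻¹) = 2κ(x) + 2κ(y) for all g, x, y ∈ G, extended ℚ-linearly to ℚ[G]. Suppose G is generated by x₁, …, x_M. Then the image of κ on ℚ[G] is contained in the ℚ-linear span of the elements κ(x_i), κ((x_i−1)(x_j−1)) for i ≤ j, and κ((x_i−1)(x_j−1)(x_k−1)) for i < j < k. -/

import Mathlib

open MonoidAlgebra

section Aux18

variable {G : Type*} [Group G] {V : Type*} [AddCommGroup V] [Module ℚ V]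

/-- `of g - 1` in the group algebra. -/
noncomputable def Ef18 (G : Type*) [Group G] (g : G) : MonoidAlgebra ℚ G := of ℚ G g - 1

variable (κ : MonoidAlgebra ℚ G →ₗ[ℚ] V)

noncomputable def kf18 (g : G) : V := κ (of ℚ G g)
noncomputable def Bf18 (g h : G) : V := κ (Ef18 G g * Ef18 G h)
noncomputable def Tf18 (a b c : G) : V := κ (Ef18 G a * Ef18 G b * Ef18 G c)
noncomputable def Ff18 (a b c d : G) : V := κ (Ef18 G a * Ef18 G b * Ef18 G c * Ef18 G d)

lemma Ef18_one : Ef18 G (1 : G) = 0 := by rw [Ef18, map_one, sub_self]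

lemma Ef18_mul (g h : G) :
    Ef18 G (g * h) = Ef18 G g + Ef18 G h + Ef18 G g * Ef18 G h := by
  simp only [Ef18, map_mul]
  noncomm_ring

lemma κone18 (h1 : κ (of ℚ G 1) = 0) : κ (1 : MonoidAlgebra ℚ G) = 0 := by
  rw [← map_one (of ℚ G)]; exact h1

lemma κE18 (h1 : κ (of ℚ G 1) = 0) (g : G) : κ (Ef18 G g) = kf18 κ g := by
  simp [Ef18, kf18, map_sub, κone18 κ h1]

lemma kf18_one (h1 : κ (of ℚ G 1) = 0) : kf18 κ (1 : G) = 0 := by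
  rw [kf18, h1]

lemma BK18 (h1 : κ (of ℚ G 1) = 0) (g h : G) : Bf18 κ g h = kf18 κ (g * h) - kf18 κ g - kf18 κ h := by
  have e : Ef18 G g * Ef18 G h = Ef18 G (g * h) - Ef18 G g - Ef18 G h := by
    rw [Ef18_mul]; abel
  rw [Bf18, e, map_sub, map_sub, κE18 κ h1, κE18 κ h1, κE18 κ h1]

lemma kadd18 (h1 : κ (of ℚ G 1) = 0) (g h : G) : kf18 κ (g * h) = kf18 κ g + kf18 κ h + Bf18 κ g h := by
  rw [BK18 κ h1]; abel

lemma T_eq18 (a b c : G) :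
    Tf18 κ a b c = Bf18 κ a (b * c) - Bf18 κ a b - Bf18 κ a c := by
  have e : Ef18 G a * Ef18 G b * Ef18 G c
      = Ef18 G a * Ef18 G (b * c) - Ef18 G a * Ef18 G b - Ef18 G a * Ef18 G c := by
    rw [Ef18_mul]; noncomm_ring
  rw [Tf18, e, map_sub, map_sub]; rfl

lemma F_eq18 (a b c d : G) :
    Ff18 κ a b c d = Tf18 κ a b (c * d) - Tf18 κ a b c - Tf18 κ a b d := by
  have e : Ef18 G a * Ef18 G b * Ef18 G c * Ef18 G d
      = Ef18 G a * Ef18 G b * Ef18 G (c * d) - Ef18 G a * Ef18 G b * Ef18 G c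
        - Ef18 G a * Ef18 G b * Ef18 G d := by
    rw [Ef18_mul]; noncomm_ring
  rw [Ff18, e, map_sub, map_sub]; rfl

lemma Badd1_18 (g h y : G) :
    Bf18 κ (g * h) y = Bf18 κ g y + Bf18 κ h y + Tf18 κ g h y := by
  have e : Ef18 G (g * h) * Ef18 G y
      = Ef18 G g * Ef18 G y + Ef18 G h * Ef18 G y + Ef18 G g * Ef18 G h * Ef18 G y := by
    rw [Ef18_mul]; noncomm_ring
  rw [Bf18, e, map_add, map_add]; rfl

lemma Badd2_18 (g h y : G) :
    Bf18 κ g (h * y) = Bf18 κ g h + Bf18 κ g y + Tf18 κ g h y := by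
  rw [T_eq18]; abel

lemma Tadd1_18 (g h b c : G) :
    Tf18 κ (g * h) b c = Tf18 κ g b c + Tf18 κ h b c + Ff18 κ g h b c := by
  have e : Ef18 G (g * h) * Ef18 G b * Ef18 G c
      = Ef18 G g * Ef18 G b * Ef18 G c + Ef18 G h * Ef18 G b * Ef18 G c
        + Ef18 G g * Ef18 G h * Ef18 G b * Ef18 G c := by
    rw [Ef18_mul]; noncomm_ring
  rw [Tf18, e, map_add, map_add]; rfl

lemma Tadd2_18 (a g h c : G) :
    Tf18 κ a (g * h) c = Tf18 κ a g c + Tf18 κ a h c + Ff18 κ a g h c := by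
  have e : Ef18 G a * Ef18 G (g * h) * Ef18 G c
      = Ef18 G a * Ef18 G g * Ef18 G c + Ef18 G a * Ef18 G h * Ef18 G c
        + Ef18 G a * Ef18 G g * Ef18 G h * Ef18 G c := by
    rw [Ef18_mul]; noncomm_ring
  rw [Tf18, e, map_add, map_add]; rfl

lemma Tadd3_18 (a b g h : G) :
    Tf18 κ a b (g * h) = Tf18 κ a b g + Tf18 κ a b h + Ff18 κ a b g h := by
  rw [F_eq18]; abel

lemma T1a_18 (b c : G) : Tf18 κ (1:G) b c = 0 := by
  rw [Tf18, Ef18_one]; simp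
lemma T1b_18 (a c : G) : Tf18 κ a (1:G) c = 0 := by
  rw [Tf18, Ef18_one]; simp
lemma T1c_18 (a b : G) : Tf18 κ a b (1:G) = 0 := by
  rw [Tf18, Ef18_one]; simp
lemma F1c_18 (a b d : G) : Ff18 κ a b (1:G) d = 0 := by
  rw [Ff18, Ef18_one]; simp
lemma F1d_18 (a b c : G) : Ff18 κ a b c (1:G) = 0 := by
  rw [Ff18, Ef18_one]; simp
lemma B1a_18 (h : G) : Bf18 κ (1:G) h = 0 := by
  rw [Bf18, Ef18_one]; simp
lemma B1b_18 (g : G) : Bf18 κ g (1:G) = 0 := by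
  rw [Bf18, Ef18_one]; simp

end Aux18

section Part2
variable {G : Type*} [Group G] {V : Type*} [AddCommGroup V] [Module ℚ V]
variable (κ : MonoidAlgebra ℚ G →ₗ[ℚ] V)

lemma half18 {v : V} (h : v = -v) : v = 0 := by
  have hv : v + v = 0 := by nth_rewrite 2 [h]; simp
  have h2 : v = (2:ℚ)⁻¹ • (v + v) := by
    rw [← two_smul ℚ v, smul_smul]
    norm_num
  rw [h2, hv, smul_zero]

lemma eq_of_double18 {a b : V} (h : a + a = b + b) : a = b := by
  have h2 : a = (2:ℚ)⁻¹ • (a + a) := by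
    rw [← two_smul ℚ a, smul_smul]; norm_num
  have h3 : b = (2:ℚ)⁻¹ • (b + b) := by
    rw [← two_smul ℚ b, smul_smul]; norm_num
  rw [h2, h3, h]

lemma κsingle18 (g : G) (c : ℚ) :
    κ (MonoidAlgebra.single g c) = c • kf18 κ g := by
  have : MonoidAlgebra.single g c = c • MonoidAlgebra.single g (1:ℚ) := by
    rw [MonoidAlgebra.smul_single', mul_one]
  rw [this, map_smul, kf18, of_apply]

lemma ktr18 (hconj : ∀ g x : G, κ (of ℚ G (g * x * g⁻¹)) = κ (of ℚ G x))
    (g h : G) : kf18 κ (g * h) = kf18 κ (h * g) := by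
  have := hconj g (h * g)
  rw [show g * (h * g) * g⁻¹ = g * h by group] at this
  exact this

lemma κtr_of18 (hconj : ∀ g x : G, κ (of ℚ G (g * x * g⁻¹)) = κ (of ℚ G x))
    (g : G) (v : MonoidAlgebra ℚ G) :
    κ (of ℚ G g * v) = κ (v * of ℚ G g) := by
  induction v using MonoidAlgebra.induction_linear with
  | zero => simp
  | add f f' hf hf' => rw [mul_add, add_mul, map_add, map_add, hf, hf']
  | single h c =>
      have e1 : of ℚ G g * MonoidAlgebra.single h c = MonoidAlgebra.single (g * h) c := by
        rw [of_apply, MonoidAlgebra.single_mul_single, one_mul]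
      have e2 : MonoidAlgebra.single h c * of ℚ G g = MonoidAlgebra.single (h * g) c := by
        rw [of_apply, MonoidAlgebra.single_mul_single, mul_one]
      rw [e1, e2, κsingle18, κsingle18, ktr18 κ hconj]

lemma κtrace18 (hconj : ∀ g x : G, κ (of ℚ G (g * x * g⁻¹)) = κ (of ℚ G x))
    (u v : MonoidAlgebra ℚ G) : κ (u * v) = κ (v * u) := by
  induction u using MonoidAlgebra.induction_linear with
  | zero => simp
  | add f f' hf hf' => rw [add_mul, mul_add, map_add, map_add, hf, hf']
  | single g c =>
      have e : (MonoidAlgebra.single g c : MonoidAlgebra ℚ G) = c • of ℚ G g := by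
        rw [of_apply, MonoidAlgebra.smul_single', mul_one]
      rw [e, smul_mul_assoc, mul_smul_comm, map_smul, map_smul, κtr_of18 κ hconj]

end Part2

section Part3
variable {G : Type*} [Group G] {V : Type*} [AddCommGroup V] [Module ℚ V]
variable (κ : MonoidAlgebra ℚ G →ₗ[ℚ] V)

lemma Bsymm18 (hconj : ∀ g x : G, κ (of ℚ G (g * x * g⁻¹)) = κ (of ℚ G x))
    (g h : G) : Bf18 κ g h = Bf18 κ h g := by
  rw [Bf18, Bf18, κtrace18 κ hconj]

lemma Tcyc18 (hconj : ∀ g x : G, κ (of ℚ G (g * x * g⁻¹)) = κ (of ℚ G x))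
    (a b c : G) : Tf18 κ a b c = Tf18 κ c a b := by
  rw [Tf18, Tf18, κtrace18 κ hconj, ← mul_assoc]

lemma Tcyc18' (hconj : ∀ g x : G, κ (of ℚ G (g * x * g⁻¹)) = κ (of ℚ G x))
    (a b c : G) : Tf18 κ a b c = Tf18 κ b c a := by
  rw [Tcyc18 κ hconj, Tcyc18 κ hconj]

lemma Fcyc18 (hconj : ∀ g x : G, κ (of ℚ G (g * x * g⁻¹)) = κ (of ℚ G x))
    (a b c d : G) : Ff18 κ a b c d = Ff18 κ d a b c := by
  rw [Ff18, Ff18, κtrace18 κ hconj]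
  simp only [← mul_assoc]

lemma Fcyc18' (hconj : ∀ g x : G, κ (of ℚ G (g * x * g⁻¹)) = κ (of ℚ G x))
    (a b c d : G) : Ff18 κ a b c d = Ff18 κ b c d a := by
  rw [Fcyc18 κ hconj, Fcyc18 κ hconj, Fcyc18 κ hconj]

lemma hrelk18 (hrel : ∀ x y : G, κ (of ℚ G (x * y)) + κ (of ℚ G (x * y⁻¹))
        = (2 : ℚ) • κ (of ℚ G x) + (2 : ℚ) • κ (of ℚ G y))
    (x y : G) : kf18 κ (x * y) + kf18 κ (x * y⁻¹)
    = kf18 κ x + kf18 κ x + kf18 κ y + kf18 κ y := by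
  have h := hrel x y
  rw [two_smul, two_smul] at h
  simp only [kf18]
  rw [h]; abel

lemma kinv18 (h1 : κ (of ℚ G 1) = 0)
    (hrel : ∀ x y : G, κ (of ℚ G (x * y)) + κ (of ℚ G (x * y⁻¹))
        = (2 : ℚ) • κ (of ℚ G x) + (2 : ℚ) • κ (of ℚ G y))
    (g : G) : kf18 κ g⁻¹ = kf18 κ g := by
  have h2 := hrelk18 κ hrel g g
  have h3 := hrelk18 κ hrel g g⁻¹
  rw [mul_inv_cancel, kf18_one κ h1] at h2
  rw [mul_inv_cancel, inv_inv, kf18_one κ h1] at h3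
  apply eq_of_double18
  have e : kf18 κ (g * g) = kf18 κ g + kf18 κ g + kf18 κ g + kf18 κ g := by
    rw [← h2]; abel
  have h5 : kf18 κ g⁻¹ + kf18 κ g⁻¹ = (0 + kf18 κ (g * g)) - kf18 κ g - kf18 κ g := by
    rw [h3]; abel
  rw [h5, e]; abel

lemma Bodd2_18 (h1 : κ (of ℚ G 1) = 0)
    (hrel : ∀ x y : G, κ (of ℚ G (x * y)) + κ (of ℚ G (x * y⁻¹))
        = (2 : ℚ) • κ (of ℚ G x) + (2 : ℚ) • κ (of ℚ G y))
    (g h : G) : Bf18 κ g h⁻¹ = -Bf18 κ g h := by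
  rw [BK18 κ h1, BK18 κ h1]
  have h6 : kf18 κ (g * h⁻¹)
      = kf18 κ g + kf18 κ g + kf18 κ h + kf18 κ h - kf18 κ (g * h) := by
    rw [← hrelk18 κ hrel g h]; abel
  rw [kinv18 κ h1 hrel h, h6]; abel

lemma Bodd1_18 (h1 : κ (of ℚ G 1) = 0)
    (hconj : ∀ g x : G, κ (of ℚ G (g * x * g⁻¹)) = κ (of ℚ G x))
    (hrel : ∀ x y : G, κ (of ℚ G (x * y)) + κ (of ℚ G (x * y⁻¹))
        = (2 : ℚ) • κ (of ℚ G x) + (2 : ℚ) • κ (of ℚ G y))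
    (g h : G) : Bf18 κ g⁻¹ h = -Bf18 κ g h := by
  rw [Bsymm18 κ hconj, Bodd2_18 κ h1 hrel, Bsymm18 κ hconj]

lemma TK18 (h1 : κ (of ℚ G 1) = 0) (a b c : G) : Tf18 κ a b c
    = kf18 κ (a * (b * c)) - kf18 κ (a * b) - kf18 κ (a * c) - kf18 κ (b * c)
      + kf18 κ a + kf18 κ b + kf18 κ c := by
  rw [T_eq18, BK18 κ h1, BK18 κ h1, BK18 κ h1]; abel

lemma T5_18 (h1 : κ (of ℚ G 1) = 0)
    (hrel : ∀ x y : G, κ (of ℚ G (x * y)) + κ (of ℚ G (x * y⁻¹))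
        = (2 : ℚ) • κ (of ℚ G x) + (2 : ℚ) • κ (of ℚ G y))
    (a b c : G) : Tf18 κ a b c⁻¹ = -Tf18 κ a b c := by
  simp only [TK18 κ h1]
  rw [show a * (b * c⁻¹) = (a * b) * c⁻¹ by rw [mul_assoc],
      show a * (b * c) = (a * b) * c by rw [mul_assoc]]
  have r1 : kf18 κ ((a * b) * c⁻¹) = kf18 κ (a * b) + kf18 κ (a * b) + kf18 κ c + kf18 κ c
      - kf18 κ ((a * b) * c) := by rw [← hrelk18 κ hrel (a * b) c]; abel
  have r2 : kf18 κ (a * c⁻¹) = kf18 κ a + kf18 κ a + kf18 κ c + kf18 κ c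
      - kf18 κ (a * c) := by rw [← hrelk18 κ hrel a c]; abel
  have r3 : kf18 κ (b * c⁻¹) = kf18 κ b + kf18 κ b + kf18 κ c + kf18 κ c
      - kf18 κ (b * c) := by rw [← hrelk18 κ hrel b c]; abel
  rw [r1, r2, r3, kinv18 κ h1 hrel c]; abel

lemma TparD18 (h1 : κ (of ℚ G 1) = 0)
    (hrel : ∀ x y : G, κ (of ℚ G (x * y)) + κ (of ℚ G (x * y⁻¹))
        = (2 : ℚ) • κ (of ℚ G x) + (2 : ℚ) • κ (of ℚ G y))
    (a b c d : G) :
    Tf18 κ a b (c * d) + Tf18 κ a b (c * d⁻¹)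
      = Tf18 κ a b c + Tf18 κ a b c := by
  simp only [TK18 κ h1]
  simp only [← mul_assoc]
  have r1 : kf18 κ (a*b*c*d⁻¹) = kf18 κ (a*b*c) + kf18 κ (a*b*c) + kf18 κ d + kf18 κ d
      - kf18 κ (a*b*c*d) := by rw [← hrelk18 κ hrel (a*b*c) d]; abel
  have r2 : kf18 κ (a*c*d⁻¹) = kf18 κ (a*c) + kf18 κ (a*c) + kf18 κ d + kf18 κ d
      - kf18 κ (a*c*d) := by rw [← hrelk18 κ hrel (a*c) d]; abel
  have r3 : kf18 κ (b*c*d⁻¹) = kf18 κ (b*c) + kf18 κ (b*c) + kf18 κ d + kf18 κ d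
      - kf18 κ (b*c*d) := by rw [← hrelk18 κ hrel (b*c) d]; abel
  have r4 : kf18 κ (c*d⁻¹) = kf18 κ c + kf18 κ c + kf18 κ d + kf18 κ d
      - kf18 κ (c*d) := by rw [← hrelk18 κ hrel c d]; abel
  rw [r1, r2, r3, r4]; abel

end Part3

section Part4
variable {G : Type*} [Group G] {V : Type*} [AddCommGroup V] [Module ℚ V]
variable (κ : MonoidAlgebra ℚ G →ₗ[ℚ] V)
variable (h1' : κ (of ℚ G 1) = 0)
variable (hconj' : ∀ g x : G, κ (of ℚ G (g * x * g⁻¹)) = κ (of ℚ G x))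
variable (hrel' : ∀ x y : G, κ (of ℚ G (x * y)) + κ (of ℚ G (x * y⁻¹))
        = (2 : ℚ) • κ (of ℚ G x) + (2 : ℚ) • κ (of ℚ G y))

set_option linter.unusedVariables false

lemma Fodd4_18 (h1 : κ (of ℚ G 1) = 0)
    (hrel : ∀ x y : G, κ (of ℚ G (x * y)) + κ (of ℚ G (x * y⁻¹))
        = (2 : ℚ) • κ (of ℚ G x) + (2 : ℚ) • κ (of ℚ G y))
    (a b c d : G) : Ff18 κ a b c d⁻¹ = -Ff18 κ a b c d := by
  rw [F_eq18, F_eq18]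
  have hp := TparD18 κ h1 hrel a b c d
  have h5 := T5_18 κ h1 hrel a b d
  have e : Tf18 κ a b (c * d⁻¹)
      = (Tf18 κ a b c + Tf18 κ a b c) - Tf18 κ a b (c * d) := by
    rw [← hp]; abel
  rw [e, h5]; abel

lemma Ffodd3_18 (h1 : κ (of ℚ G 1) = 0)
    (hconj : ∀ g x : G, κ (of ℚ G (g * x * g⁻¹)) = κ (of ℚ G x))
    (hrel : ∀ x y : G, κ (of ℚ G (x * y)) + κ (of ℚ G (x * y⁻¹))
        = (2 : ℚ) • κ (of ℚ G x) + (2 : ℚ) • κ (of ℚ G y))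
    (a b c d : G) : Ff18 κ a b c⁻¹ d = -Ff18 κ a b c d := by
  rw [Fcyc18 κ hconj a b c⁻¹ d, Fodd4_18 κ h1 hrel d a b c, Fcyc18 κ hconj a b c d]

lemma Fcc18 (h1 : κ (of ℚ G 1) = 0)
    (hrel : ∀ x y : G, κ (of ℚ G (x * y)) + κ (of ℚ G (x * y⁻¹))
        = (2 : ℚ) • κ (of ℚ G x) + (2 : ℚ) • κ (of ℚ G y))
    (a b c : G) : Ff18 κ a b c c⁻¹ = 0 := by
  rw [F_eq18, mul_inv_cancel, T1c_18, T5_18 κ h1 hrel]; abel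

lemma Fcc18' (h1 : κ (of ℚ G 1) = 0)
    (hrel : ∀ x y : G, κ (of ℚ G (x * y)) + κ (of ℚ G (x * y⁻¹))
        = (2 : ℚ) • κ (of ℚ G x) + (2 : ℚ) • κ (of ℚ G y))
    (a b c : G) : Ff18 κ a b c⁻¹ c = 0 := by
  rw [F_eq18, inv_mul_cancel, T1c_18, T5_18 κ h1 hrel]; abel

lemma FCO18 (a b c d e : G) :
    Ff18 κ a b (c * d) e + Ff18 κ a b c d
      = Ff18 κ a b c (d * e) + Ff18 κ a b d e := by
  simp only [F_eq18]
  rw [mul_assoc c d e]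
  abel

lemma FI2_18 (h1 : κ (of ℚ G 1) = 0)
    (hrel : ∀ x y : G, κ (of ℚ G (x * y)) + κ (of ℚ G (x * y⁻¹))
        = (2 : ℚ) • κ (of ℚ G x) + (2 : ℚ) • κ (of ℚ G y))
    (a b u v : G) : Ff18 κ a b u⁻¹ (u * v) = -Ff18 κ a b u v := by
  have h := FCO18 κ a b u⁻¹ u v
  rw [inv_mul_cancel, F1c_18, Fcc18' κ h1 hrel] at h
  have h2 : Ff18 κ a b u⁻¹ (u * v) + Ff18 κ a b u v = 0 := by rw [← h]; abel
  exact eq_neg_of_add_eq_zero_left h2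

lemma Fswap34_18 (h1 : κ (of ℚ G 1) = 0)
    (hconj : ∀ g x : G, κ (of ℚ G (g * x * g⁻¹)) = κ (of ℚ G x))
    (hrel : ∀ x y : G, κ (of ℚ G (x * y)) + κ (of ℚ G (x * y⁻¹))
        = (2 : ℚ) • κ (of ℚ G x) + (2 : ℚ) • κ (of ℚ G y))
    (a b c d : G) : Ff18 κ a b c d = -Ff18 κ a b d c := by
  have h0 := FCO18 κ a b c d (c * d)⁻¹
  rw [Fcc18 κ h1 hrel a b (c * d)] at h0
  rw [show d * (c * d)⁻¹ = c⁻¹ by group] at h0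
  rw [Fcc18 κ h1 hrel a b c] at h0
  rw [mul_inv_rev] at h0
  have h2 := FI2_18 κ h1 hrel a b d⁻¹ c⁻¹
  rw [inv_inv] at h2
  rw [h2] at h0
  rw [Ffodd3_18 κ h1 hconj hrel a b d c⁻¹] at h0
  rw [Fodd4_18 κ h1 hrel a b d c] at h0
  simpa using h0

lemma Fzero18 (h1 : κ (of ℚ G 1) = 0)
    (hconj : ∀ g x : G, κ (of ℚ G (g * x * g⁻¹)) = κ (of ℚ G x))
    (hrel : ∀ x y : G, κ (of ℚ G (x * y)) + κ (of ℚ G (x * y⁻¹))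
        = (2 : ℚ) • κ (of ℚ G x) + (2 : ℚ) • κ (of ℚ G y))
    (a b c d : G) : Ff18 κ a b c d = 0 := by
  apply half18
  calc Ff18 κ a b c d = Ff18 κ b c d a := Fcyc18' κ hconj a b c d
    _ = -Ff18 κ b c a d := Fswap34_18 κ h1 hconj hrel b c d a
    _ = -Ff18 κ c a d b := by rw [Fcyc18' κ hconj b c a d]
    _ = Ff18 κ c a b d := by rw [Fswap34_18 κ h1 hconj hrel c a d b, neg_neg]
    _ = Ff18 κ a b d c := Fcyc18' κ hconj c a b d
    _ = -Ff18 κ a b c d := Fswap34_18 κ h1 hconj hrel a b d c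

end Part4

section Part5
variable {G : Type*} [Group G] {V : Type*} [AddCommGroup V] [Module ℚ V]
variable (κ : MonoidAlgebra ℚ G →ₗ[ℚ] V)

lemma Tadd3Z18 (h1 : κ (of ℚ G 1) = 0)
    (hconj : ∀ g x : G, κ (of ℚ G (g * x * g⁻¹)) = κ (of ℚ G x))
    (hrel : ∀ x y : G, κ (of ℚ G (x * y)) + κ (of ℚ G (x * y⁻¹))
        = (2 : ℚ) • κ (of ℚ G x) + (2 : ℚ) • κ (of ℚ G y))
    (a b g h : G) : Tf18 κ a b (g * h) = Tf18 κ a b g + Tf18 κ a b h := by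
  rw [Tadd3_18, Fzero18 κ h1 hconj hrel, add_zero]

lemma Tadd2Z18 (h1 : κ (of ℚ G 1) = 0)
    (hconj : ∀ g x : G, κ (of ℚ G (g * x * g⁻¹)) = κ (of ℚ G x))
    (hrel : ∀ x y : G, κ (of ℚ G (x * y)) + κ (of ℚ G (x * y⁻¹))
        = (2 : ℚ) • κ (of ℚ G x) + (2 : ℚ) • κ (of ℚ G y))
    (a g h c : G) : Tf18 κ a (g * h) c = Tf18 κ a g c + Tf18 κ a h c := by
  rw [Tadd2_18, Fzero18 κ h1 hconj hrel, add_zero]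

lemma Tadd1Z18 (h1 : κ (of ℚ G 1) = 0)
    (hconj : ∀ g x : G, κ (of ℚ G (g * x * g⁻¹)) = κ (of ℚ G x))
    (hrel : ∀ x y : G, κ (of ℚ G (x * y)) + κ (of ℚ G (x * y⁻¹))
        = (2 : ℚ) • κ (of ℚ G x) + (2 : ℚ) • κ (of ℚ G y))
    (g h b c : G) : Tf18 κ (g * h) b c = Tf18 κ g b c + Tf18 κ h b c := by
  rw [Tadd1_18, Fzero18 κ h1 hconj hrel, add_zero]

lemma TCO18 (a y z w : G) :
    Tf18 κ a (y * z) w + Tf18 κ a y z = Tf18 κ a y (z * w) + Tf18 κ a z w := by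
  simp only [T_eq18]
  rw [mul_assoc y z w]
  abel

lemma Tvyyinv18 (h1 : κ (of ℚ G 1) = 0)
    (hrel : ∀ x y : G, κ (of ℚ G (x * y)) + κ (of ℚ G (x * y⁻¹))
        = (2 : ℚ) • κ (of ℚ G x) + (2 : ℚ) • κ (of ℚ G y))
    (a w : G) : Tf18 κ a w w⁻¹ = 0 := by
  rw [T_eq18, mul_inv_cancel, B1b_18, Bodd2_18 κ h1 hrel]; abel

lemma Tvyinvy18 (h1 : κ (of ℚ G 1) = 0)
    (hrel : ∀ x y : G, κ (of ℚ G (x * y)) + κ (of ℚ G (x * y⁻¹))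
        = (2 : ℚ) • κ (of ℚ G x) + (2 : ℚ) • κ (of ℚ G y))
    (a w : G) : Tf18 κ a w⁻¹ w = 0 := by
  rw [T_eq18, inv_mul_cancel, B1b_18, Bodd2_18 κ h1 hrel]; abel

lemma TI2_18 (h1 : κ (of ℚ G 1) = 0)
    (hrel : ∀ x y : G, κ (of ℚ G (x * y)) + κ (of ℚ G (x * y⁻¹))
        = (2 : ℚ) • κ (of ℚ G x) + (2 : ℚ) • κ (of ℚ G y))
    (a z w : G) : Tf18 κ a z⁻¹ (z * w) = -Tf18 κ a z w := by
  have h := TCO18 κ a z⁻¹ z w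
  rw [inv_mul_cancel, T1b_18, Tvyinvy18 κ h1 hrel] at h
  have h2 : Tf18 κ a z⁻¹ (z * w) + Tf18 κ a z w = 0 := by rw [← h]; abel
  exact eq_neg_of_add_eq_zero_left h2

lemma Todd1_18 (h1 : κ (of ℚ G 1) = 0)
    (hconj : ∀ g x : G, κ (of ℚ G (g * x * g⁻¹)) = κ (of ℚ G x))
    (hrel : ∀ x y : G, κ (of ℚ G (x * y)) + κ (of ℚ G (x * y⁻¹))
        = (2 : ℚ) • κ (of ℚ G x) + (2 : ℚ) • κ (of ℚ G y))
    (a b c : G) : Tf18 κ a⁻¹ b c = -Tf18 κ a b c := by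
  rw [Tcyc18' κ hconj a⁻¹ b c, T5_18 κ h1 hrel b c a, Tcyc18 κ hconj b c a]

lemma Todd2_18 (h1 : κ (of ℚ G 1) = 0)
    (hconj : ∀ g x : G, κ (of ℚ G (g * x * g⁻¹)) = κ (of ℚ G x))
    (hrel : ∀ x y : G, κ (of ℚ G (x * y)) + κ (of ℚ G (x * y⁻¹))
        = (2 : ℚ) • κ (of ℚ G x) + (2 : ℚ) • κ (of ℚ G y))
    (a b c : G) : Tf18 κ a b⁻¹ c = -Tf18 κ a b c := by
  rw [Tcyc18' κ hconj a b⁻¹ c, Todd1_18 κ h1 hconj hrel b c a, Tcyc18 κ hconj b c a]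

lemma TAS18 (h1 : κ (of ℚ G 1) = 0)
    (hconj : ∀ g x : G, κ (of ℚ G (g * x * g⁻¹)) = κ (of ℚ G x))
    (hrel : ∀ x y : G, κ (of ℚ G (x * y)) + κ (of ℚ G (x * y⁻¹))
        = (2 : ℚ) • κ (of ℚ G x) + (2 : ℚ) • κ (of ℚ G y))
    (a y z : G) : Tf18 κ a y z = -Tf18 κ a z y := by
  have h := TCO18 κ a y z (y * z)⁻¹
  rw [Tvyyinv18 κ h1 hrel a (y * z)] at h
  rw [show z * (y * z)⁻¹ = y⁻¹ by group] at h
  rw [Tvyyinv18 κ h1 hrel a y] at h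
  rw [mul_inv_rev] at h
  have h2 := TI2_18 κ h1 hrel a z⁻¹ y⁻¹
  rw [inv_inv] at h2
  rw [h2] at h
  rw [Todd2_18 κ h1 hconj hrel a z y⁻¹] at h
  rw [T5_18 κ h1 hrel a z y] at h
  simpa using h

lemma Tswap12_18 (h1 : κ (of ℚ G 1) = 0)
    (hconj : ∀ g x : G, κ (of ℚ G (g * x * g⁻¹)) = κ (of ℚ G x))
    (hrel : ∀ x y : G, κ (of ℚ G (x * y)) + κ (of ℚ G (x * y⁻¹))
        = (2 : ℚ) • κ (of ℚ G x) + (2 : ℚ) • κ (of ℚ G y))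
    (a b c : G) : Tf18 κ a b c = -Tf18 κ b a c := by
  have e : Tf18 κ b a c = -Tf18 κ a b c := by
    rw [Tcyc18' κ hconj b a c]
    exact TAS18 κ h1 hconj hrel a c b
  rw [e, neg_neg]

lemma Taab18 (h1 : κ (of ℚ G 1) = 0)
    (hconj : ∀ g x : G, κ (of ℚ G (g * x * g⁻¹)) = κ (of ℚ G x))
    (hrel : ∀ x y : G, κ (of ℚ G (x * y)) + κ (of ℚ G (x * y⁻¹))
        = (2 : ℚ) • κ (of ℚ G x) + (2 : ℚ) • κ (of ℚ G y))
    (a c : G) : Tf18 κ a a c = 0 :=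
  half18 (Tswap12_18 κ h1 hconj hrel a a c)

lemma Tabb18 (h1 : κ (of ℚ G 1) = 0)
    (hconj : ∀ g x : G, κ (of ℚ G (g * x * g⁻¹)) = κ (of ℚ G x))
    (hrel : ∀ x y : G, κ (of ℚ G (x * y)) + κ (of ℚ G (x * y⁻¹))
        = (2 : ℚ) • κ (of ℚ G x) + (2 : ℚ) • κ (of ℚ G y))
    (a b : G) : Tf18 κ a b b = 0 :=
  half18 (TAS18 κ h1 hconj hrel a b b)

lemma Taba18 (h1 : κ (of ℚ G 1) = 0)
    (hconj : ∀ g x : G, κ (of ℚ G (g * x * g⁻¹)) = κ (of ℚ G x))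
    (hrel : ∀ x y : G, κ (of ℚ G (x * y)) + κ (of ℚ G (x * y⁻¹))
        = (2 : ℚ) • κ (of ℚ G x) + (2 : ℚ) • κ (of ℚ G y))
    (a b : G) : Tf18 κ a b a = 0 := by
  rw [Tcyc18 κ hconj a b a]
  exact Taab18 κ h1 hconj hrel a b

end Part5

theorem stmt_18 {G : Type*} [Group G] {V : Type*} [AddCommGroup V] [Module ℚ V]
    (κ : MonoidAlgebra ℚ G →ₗ[ℚ] V)
    (h1 : κ (of ℚ G 1) = 0)
    (hconj : ∀ g x : G, κ (of ℚ G (g * x * g⁻¹)) = κ (of ℚ G x))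
    (hrel : ∀ x y : G, κ (of ℚ G (x * y)) + κ (of ℚ G (x * y⁻¹))
        = (2 : ℚ) • κ (of ℚ G x) + (2 : ℚ) • κ (of ℚ G y))
    (M : ℕ) (x : Fin M → G)
    (hgen : Subgroup.closure (Set.range x) = ⊤) :
    ∀ a : MonoidAlgebra ℚ G,
      κ a ∈ Submodule.span ℚ
        ((Set.range fun i => κ (of ℚ G (x i)))
          ∪ {v | ∃ i j : Fin M, i ≤ j ∧
              v = κ ((of ℚ G (x i) - 1) * (of ℚ G (x j) - 1))}
          ∪ {v | ∃ i j k : Fin M, i < j ∧ j < k ∧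
              v = κ ((of ℚ G (x i) - 1) * (of ℚ G (x j) - 1) * (of ℚ G (x k) - 1))}) := by
  set S : Submodule ℚ V := Submodule.span ℚ
        ((Set.range fun i => κ (of ℚ G (x i)))
          ∪ {v | ∃ i j : Fin M, i ≤ j ∧
              v = κ ((of ℚ G (x i) - 1) * (of ℚ G (x j) - 1))}
          ∪ {v | ∃ i j k : Fin M, i < j ∧ j < k ∧
              v = κ ((of ℚ G (x i) - 1) * (of ℚ G (x j) - 1) * (of ℚ G (x k) - 1))}) with hS
  have hk1 : ∀ i, kf18 κ (x i) ∈ S := by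
    intro i
    exact Submodule.subset_span (Or.inl (Or.inl ⟨i, rfl⟩))
  have hB : ∀ i j, Bf18 κ (x i) (x j) ∈ S := by
    intro i j
    rcases le_total i j with h | h
    · exact Submodule.subset_span (Or.inl (Or.inr ⟨i, j, h, rfl⟩))
    · rw [Bsymm18 κ hconj]
      exact Submodule.subset_span (Or.inl (Or.inr ⟨j, i, h, rfl⟩))
  have hTs : ∀ i j l : Fin M, i < j → j < l → Tf18 κ (x i) (x j) (x l) ∈ S := by
    intro i j l hij hjl
    exact Submodule.subset_span (Or.inr ⟨i, j, l, hij, hjl, rfl⟩)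
  have hT : ∀ i j l : Fin M, Tf18 κ (x i) (x j) (x l) ∈ S := by
    intro i j l
    rcases lt_trichotomy i j with hij | rfl | hij
    · rcases lt_trichotomy j l with hjl | rfl | hjl
      · exact hTs i j l hij hjl
      · rw [Tabb18 κ h1 hconj hrel]; exact S.zero_mem
      · rcases lt_trichotomy i l with hil | rfl | hil
        · rw [TAS18 κ h1 hconj hrel]
          exact S.neg_mem (hTs i l j hil hjl)
        · rw [Taba18 κ h1 hconj hrel]; exact S.zero_mem
        · rw [Tcyc18 κ hconj]
          exact hTs l i j hil hij
    · rw [Taab18 κ h1 hconj hrel]; exact S.zero_mem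
    · rcases lt_trichotomy i l with hil | rfl | hil
      · rw [Tswap12_18 κ h1 hconj hrel]
        exact S.neg_mem (hTs j i l hij hil)
      · rw [Taba18 κ h1 hconj hrel]; exact S.zero_mem
      · rcases lt_trichotomy j l with hjl | rfl | hjl
        · rw [Tcyc18' κ hconj]
          exact hTs j l i hjl hil
        · rw [Tabb18 κ h1 hconj hrel]; exact S.zero_mem
        · rw [TAS18 κ h1 hconj hrel, Tcyc18' κ hconj]
          exact S.neg_mem (hTs l j i hjl hij)
  have hmem : ∀ g : G, g ∈ Subgroup.closure (Set.range x) := by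
    intro g; rw [hgen]; trivial
  have hT3 : ∀ c : G, ∀ i j, Tf18 κ (x i) (x j) c ∈ S := by
    intro c
    refine Subgroup.closure_induction
      (p := fun c _ => ∀ i j, Tf18 κ (x i) (x j) c ∈ S) ?_ ?_ ?_ ?_ (hmem c)
    · rintro c ⟨l, rfl⟩ i j; exact hT i j l
    · intro i j; rw [T1c_18]; exact S.zero_mem
    · intro u v _ _ pu pv i j
      rw [Tadd3Z18 κ h1 hconj hrel]
      exact S.add_mem (pu i j) (pv i j)
    · intro u _ pu i j
      rw [T5_18 κ h1 hrel]
      exact S.neg_mem (pu i j)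
  have hT2 : ∀ b : G, ∀ i, ∀ c : G, Tf18 κ (x i) b c ∈ S := by
    intro b
    refine Subgroup.closure_induction
      (p := fun b _ => ∀ i, ∀ c : G, Tf18 κ (x i) b c ∈ S) ?_ ?_ ?_ ?_ (hmem b)
    · rintro b ⟨j, rfl⟩ i c; exact hT3 c i j
    · intro i c; rw [T1b_18]; exact S.zero_mem
    · intro u v _ _ pu pv i c
      rw [Tadd2Z18 κ h1 hconj hrel]
      exact S.add_mem (pu i c) (pv i c)
    · intro u _ pu i c
      rw [Todd2_18 κ h1 hconj hrel]
      exact S.neg_mem (pu i c)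
  have hT1 : ∀ a b c : G, Tf18 κ a b c ∈ S := by
    intro a
    refine Subgroup.closure_induction
      (p := fun a _ => ∀ b c : G, Tf18 κ a b c ∈ S) ?_ ?_ ?_ ?_ (hmem a)
    · rintro a ⟨i, rfl⟩ b c; exact hT2 b i c
    · intro b c; rw [T1a_18]; exact S.zero_mem
    · intro u v _ _ pu pv b c
      rw [Tadd1Z18 κ h1 hconj hrel]
      exact S.add_mem (pu b c) (pv b c)
    · intro u _ pu b c
      rw [Todd1_18 κ h1 hconj hrel]
      exact S.neg_mem (pu b c)
  have hB1 : ∀ h : G, ∀ i, Bf18 κ (x i) h ∈ S := by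
    intro h
    refine Subgroup.closure_induction
      (p := fun h _ => ∀ i, Bf18 κ (x i) h ∈ S) ?_ ?_ ?_ ?_ (hmem h)
    · rintro h ⟨j, rfl⟩ i; exact hB i j
    · intro i; rw [B1b_18]; exact S.zero_mem
    · intro u v _ _ pu pv i
      rw [Badd2_18]
      exact S.add_mem (S.add_mem (pu i) (pv i)) (hT1 _ _ _)
    · intro u _ pu i
      rw [Bodd2_18 κ h1 hrel]
      exact S.neg_mem (pu i)
  have hB2 : ∀ g h : G, Bf18 κ g h ∈ S := by
    intro g
    refine Subgroup.closure_induction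
      (p := fun g _ => ∀ h : G, Bf18 κ g h ∈ S) ?_ ?_ ?_ ?_ (hmem g)
    · rintro g ⟨i, rfl⟩ h; exact hB1 h i
    · intro h; rw [B1a_18]; exact S.zero_mem
    · intro u v _ _ pu pv h
      rw [Badd1_18]
      exact S.add_mem (S.add_mem (pu h) (pv h)) (hT1 _ _ _)
    · intro u _ pu h
      rw [Bodd1_18 κ h1 hconj hrel]
      exact S.neg_mem (pu h)
  have hkAll : ∀ g : G, kf18 κ g ∈ S := by
    intro g
    refine Subgroup.closure_induction
      (p := fun g _ => kf18 κ g ∈ S) ?_ ?_ ?_ ?_ (hmem g)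
    · rintro g ⟨i, rfl⟩; exact hk1 i
    · show kf18 κ (1 : G) ∈ S
      rw [kf18_one κ h1]; exact S.zero_mem
    · intro u v _ _ pu pv
      show kf18 κ (u * v) ∈ S
      rw [kadd18 κ h1]
      exact S.add_mem (S.add_mem pu pv) (hB2 u v)
    · intro u _ pu
      show kf18 κ u⁻¹ ∈ S
      rw [kinv18 κ h1 hrel]
      exact pu
  intro a
  induction a using MonoidAlgebra.induction_linear with
  | zero => rw [map_zero]; exact S.zero_mem
  | add f g hf hg => rw [map_add]; exact S.add_mem hf hg
  | single g c =>
      have e : κ (MonoidAlgebra.single g c) = c • kf18 κ g := κsingle18 κ g c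
      rw [e]
      exact S.smul_mem c (hkAll g)
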